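/- The iterated integral coefficients satisfy the Chen two-parameter group property under convolution: for all s, t, t₀ ∈ ℝ, α(t₀; t₀) = 𝟙 and α(s; t₀) ⋆ α(t; s) = α(t; t₀). -/

import Mathlib

noncomputable def conv {A : Type*} (δ δ' : List A → ℂ) : List A → ℂ :=
  fun w => ∑ j ∈ Finset.range (w.length + 1), δ (w.take j) * δ' (w.drop j)

noncomputable def convOne {A : Type*} [DecidableEq A] : List A → ℂ :=
  fun w => if w = [] then 1 else 0

noncomputable def iterInt {A : Type*} (lam : A → ℝ → ℂ) (t₀ : ℝ) : List A → ℝ → ℂ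
  | [] => fun _ => 1
  | l :: w => fun t => ∫ s in t₀..t, lam l s * iterInt lam t₀ w s

noncomputable def alphaCoef {A : Type*} (lam : A → ℝ → ℂ) (t₀ : ℝ)
    (w : List A) (t : ℝ) : ℂ :=
  iterInt lam t₀ w.reverse t

lemma iterInt_continuous {A : Type*} (lam : A → ℝ → ℂ) (hlam : ∀ l, Continuous (lam l))
    (t₀ : ℝ) : ∀ v : List A, Continuous (iterInt lam t₀ v)
  | [] => continuous_const
  | l :: w => by
      have hc : Continuous fun r => lam l r * iterInt lam t₀ w r :=
        (hlam l).mul (iterInt_continuous lam hlam t₀ w)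
      exact intervalIntegral.continuous_primitive (fun a b => hc.intervalIntegrable a b) t₀

lemma chen_key {A : Type*} (lam : A → ℝ → ℂ) (hlam : ∀ l, Continuous (lam l)) (t₀ s : ℝ) :
    ∀ (w : List A) (t : ℝ),
      (∑ j ∈ Finset.range (w.length + 1),
        iterInt lam t₀ (w.take j).reverse s * iterInt lam s (w.drop j).reverse t)
        = iterInt lam t₀ w.reverse t := by
  intro w
  induction w using List.reverseRecOn with
  | nil => intro t; simp [iterInt]
  | append_singleton u l ih =>
    intro t
    rw [List.length_append, List.length_singleton, Finset.sum_range_succ]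
    have hlast : ((u ++ [l]).take (u.length + 1)).reverse = l :: u.reverse := by
      rw [List.take_of_length_le (by simp), List.reverse_append]; rfl
    have hdroplast : (u ++ [l]).drop (u.length + 1) = [] := by
      rw [List.drop_of_length_le (by simp)]
    rw [hlast, hdroplast]
    have hterm : ∀ j ∈ Finset.range (u.length + 1),
        iterInt lam t₀ ((u ++ [l]).take j).reverse s *
          iterInt lam s ((u ++ [l]).drop j).reverse t
        = ∫ r in s..t, iterInt lam t₀ (u.take j).reverse s *
            (lam l r * iterInt lam s (u.drop j).reverse r) := by
      intro j hj
      rw [Finset.mem_range] at hj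
      have hj' : j ≤ u.length := Nat.lt_succ_iff.mp hj
      rw [List.take_append_of_le_length hj', List.drop_append_of_le_length hj',
        List.reverse_append, List.reverse_singleton]
      simp only [List.singleton_append, List.nil_append, iterInt]
      rw [intervalIntegral.integral_const_mul]
    rw [Finset.sum_congr rfl hterm]
    have hint : ∀ j ∈ Finset.range (u.length + 1),
        IntervalIntegrable (fun r => iterInt lam t₀ (u.take j).reverse s *
          (lam l r * iterInt lam s (u.drop j).reverse r)) MeasureTheory.volume s t := by
      intro j _
      exact (continuous_const.mul ((hlam l).mul
        (iterInt_continuous lam hlam s _))).intervalIntegrable s t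
    rw [← intervalIntegral.integral_finset_sum hint]
    have hinner : ∀ r : ℝ,
        (∑ j ∈ Finset.range (u.length + 1),
          iterInt lam t₀ (u.take j).reverse s *
            (lam l r * iterInt lam s (u.drop j).reverse r))
        = lam l r * iterInt lam t₀ u.reverse r := by
      intro r
      rw [← ih r, Finset.mul_sum]
      congr 1; ext j; ring
    simp only [hinner]
    have hsplit : (∫ r in t₀..s, lam l r * iterInt lam t₀ u.reverse r) +
        (∫ r in s..t, lam l r * iterInt lam t₀ u.reverse r)
        = ∫ r in t₀..t, lam l r * iterInt lam t₀ u.reverse r := by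
      apply intervalIntegral.integral_add_adjacent_intervals <;>
        exact ((hlam l).mul (iterInt_continuous lam hlam t₀ _)).intervalIntegrable _ _
    have hrev : (u ++ [l]).reverse = l :: u.reverse := by
      rw [List.reverse_append]; rfl
    rw [hrev]
    simp only [iterInt, List.reverse_nil]
    rw [← hsplit]
    ring

/-- Chen's two-parameter group property of the iterated-integral coefficients. -/
theorem alphaCoef_chen {A : Type*} [DecidableEq A] (lam : A → ℝ → ℂ)
    (hlam : ∀ l, Continuous (lam l)) (s t t₀ : ℝ) :
    (fun w => alphaCoef lam t₀ w t₀) = convOne ∧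
    conv (fun w => alphaCoef lam t₀ w s) (fun w => alphaCoef lam s w t) =
      fun w => alphaCoef lam t₀ w t := by
  constructor
  · funext w
    cases w with
    | nil => simp [alphaCoef, iterInt, convOne]
    | cons a w =>
      simp only [alphaCoef, convOne, List.reverse_cons]
      rw [if_neg (by simp : a :: w ≠ [])]
      cases h : w.reverse ++ [a] with
      | nil => simp at h
      | cons b v => simp [iterInt]
  · funext w
    exact chen_key lam hlam t₀ s w t
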